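/- For n ≥ 2, n ≥ k > l ≥ 0 and λ in the k-positive cone Γₖ ⊂ ℝⁿ ordered so that λ₁ ≥ λ₂ ≥ ... ≥ λₙ, the partial derivatives F^{i} = ∂/∂λᵢ of F(λ) = log(Sₖ(λ)/Sₗ(λ)) satisfy F^{i} = S_{k-1;i}(λ)/Sₖ(λ) - S_{l-1;i}(λ)/Sₗ(λ), and these are ordered in reverse: Fⁿ ≥ F^{n-1} ≥ ... ≥ F¹ ≥ 0 (with F¹ > 0). -/

import Mathlib

open Polynomial
set_option linter.unusedSectionVars false

noncomputable section P11
variable {ι : Type*} [DecidableEq ι]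

/-- Sum over `m`-subsets of `s` of products of `f`. -/
def EE (s : Finset ι) (m : ℕ) (f : ι → ℝ) : ℝ := ∑ t ∈ s.powersetCard m, ∏ i ∈ t, f i

lemma EE_zero (s : Finset ι) (f : ι → ℝ) : EE s 0 f = 1 := by simp [EE]

lemma EE_of_card_lt {s : Finset ι} {m : ℕ} (h : s.card < m) (f : ι → ℝ) : EE s m f = 0 := by
  rw [EE, Finset.powersetCard_eq_empty.mpr h, Finset.sum_empty]

lemma EE_congr {s : Finset ι} {f g : ι → ℝ} (h : ∀ i ∈ s, f i = g i) (m : ℕ) :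
    EE s m f = EE s m g := by
  refine Finset.sum_congr rfl fun t ht => Finset.prod_congr rfl fun i hi => ?_
  exact h i ((Finset.mem_powersetCard.1 ht).1 hi)

lemma EE_split {s : Finset ι} {i : ι} (hi : i ∈ s) (m : ℕ) (f : ι → ℝ) :
    EE s (m+1) f = EE (s.erase i) (m+1) f + f i * EE (s.erase i) m f := by
  classical
  conv_lhs => rw [EE, ← Finset.insert_erase hi,
    Finset.powersetCard_succ_insert (Finset.notMem_erase i s)]
  have hdisj : Disjoint ((s.erase i).powersetCard (m+1))
      (((s.erase i).powersetCard m).image (insert i)) := by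
    rw [Finset.disjoint_right]
    rintro t ht hts
    obtain ⟨u, hu, rfl⟩ := Finset.mem_image.1 ht
    have h1 : insert i u ⊆ s.erase i := (Finset.mem_powersetCard.1 hts).1
    exact Finset.notMem_erase i s (h1 (Finset.mem_insert_self i u))
  rw [Finset.sum_union hdisj]
  have himg : ∑ t ∈ ((s.erase i).powersetCard m).image (insert i), ∏ j ∈ t, f j
      = f i * EE (s.erase i) m f := by
    rw [Finset.sum_image ?inj]
    · rw [EE, Finset.mul_sum]
      refine Finset.sum_congr rfl fun u hu => ?_
      have hiu : i ∉ u := fun h => Finset.notMem_erase i s ((Finset.mem_powersetCard.1 hu).1 h)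
      rw [Finset.prod_insert hiu]
    · intro u hu v hv huv
      have hiu : i ∉ u := fun h => Finset.notMem_erase i s ((Finset.mem_powersetCard.1 hu).1 h)
      have hiv : i ∉ v := fun h => Finset.notMem_erase i s ((Finset.mem_powersetCard.1 hv).1 h)
      have := congrArg (fun t => Finset.erase t i) huv
      simpa [Finset.erase_insert hiu, Finset.erase_insert hiv] using this
  rw [himg]; rfl

lemma EE_eq_coeff {s : Finset ι} {m : ℕ} (h : m ≤ s.card) (f : ι → ℝ) :
    (∏ i ∈ s, (X + C (f i))).coeff (s.card - m) = EE s m f := by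
  rw [Finset.prod_X_add_C_coeff s f (Nat.sub_le _ _), Nat.sub_sub_self h, EE]


lemma RR_derivative {p : ℝ[X]} (hp : p.Splits) :
    (derivative p).Splits := by
  by_cases hd : derivative p = 0
  · rw [hd]; exact Splits.zero
  have hdeg : p.natDegree ≠ 0 := by
    intro h0
    obtain ⟨a, rfl⟩ := Polynomial.natDegree_eq_zero.1 h0
    exact hd (derivative_C)
  rw [splits_iff_card_roots] at hp ⊢
  have h1 := p.card_roots_le_derivative
  have h2 := (derivative p).card_roots'
  have h3 : (derivative p).natDegree < p.natDegree := natDegree_derivative_lt hdeg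
  omega

lemma RR_iterate {p : ℝ[X]} (hp : p.Splits) (r : ℕ) :
    (derivative^[r] p).Splits := by
  induction r with
  | zero => exact hp
  | succ r ih => rw [Function.iterate_succ_apply']; exact RR_derivative ih

lemma RR_reverse_prod (R : Multiset ℝ) :
    ((R.map fun r => X - C r).prod).reverse.Splits := by
  induction R using Multiset.induction_on with
  | empty => rw [Multiset.map_zero, Multiset.prod_zero, show (1:ℝ[X]) = C 1 by simp, reverse_C]; exact Splits.one
  | cons r R ih =>
      rw [Multiset.map_cons, Multiset.prod_cons, reverse_mul_of_domain]
      refine Splits.mul (Splits.of_natDegree_le_one ?_) ih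
      exact (reverse_natDegree_le _).trans (by simp)

lemma RR_reverse {p : ℝ[X]} (hp : p.Splits) :
    p.reverse.Splits := by
  by_cases hp0 : p = 0
  · rw [hp0, reverse_zero]; exact Splits.zero
  rw [hp.eq_prod_roots, reverse_mul_of_domain]
  exact Splits.mul (Splits.of_natDegree_le_one ((reverse_natDegree_le _).trans (by simp)))
    (RR_reverse_prod _)

lemma descFactorial_ne_zero' {n k : ℕ} (h : k ≤ n) : (n.descFactorial k : ℝ) ≠ 0 := by
  have : n.descFactorial k ≠ 0 := by
    simp only [ne_eq, Nat.descFactorial_eq_zero_iff_lt]; omega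
  exact_mod_cast this

set_option maxHeartbeats 1000000 in
lemma newton_core (s : Finset ι) (f : ι → ℝ) {m : ℕ} (hm : 1 ≤ m) (hms : m + 1 ≤ s.card) :
    ((s.card.choose m : ℝ))^2 * (EE s (m-1) f * EE s (m+1) f)
      ≤ ((s.card.choose (m-1) : ℝ) * (s.card.choose (m+1) : ℝ)) * (EE s m f)^2 := by
  classical
  by_cases hprod : EE s (m-1) f * EE s (m+1) f ≤ 0
  · have h1 : ((s.card.choose m : ℝ))^2 * (EE s (m-1) f * EE s (m+1) f) ≤ 0 :=
      mul_nonpos_of_nonneg_of_nonpos (sq_nonneg _) hprod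
    have h2 : (0:ℝ) ≤ ((s.card.choose (m-1) : ℝ) * (s.card.choose (m+1) : ℝ)) * (EE s m f)^2 := by
      positivity
    linarith
  push_neg at hprod
  set N := s.card with hN
  set r := N - m - 1 with hr
  have hrm : N = m + 1 + r := by omega
  set F : ℝ[X] := ∏ i ∈ s, (X + C (f i)) with hF
  have hFdeg : F.natDegree = N := by
    rw [hF, natDegree_prod _ _ (fun i _ => (monic_X_add_C (f i)).ne_zero)]
    simp [hN]
  have hFsplits : F.Splits :=
    Splits.prod fun i _ => Splits.of_natDegree_le_one (by simp)
  set h : ℝ[X] := derivative^[r] F with hh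
  have hhc : ∀ j, h.coeff j = ((j + r).descFactorial r : ℝ) * F.coeff (j + r) := by
    intro j; rw [hh, coeff_iterate_derivative]; simp [nsmul_eq_mul]
  have hhcoeff : ∀ j, j ≤ m + 1 → h.coeff j = ((j + r).descFactorial r : ℝ) * EE s (m + 1 - j) f := by
    intro j hj
    rw [hhc j]
    have he : j + r = N - (m + 1 - j) := by omega
    rw [he, EE_eq_coeff (by omega) f]
  have hhzero : ∀ j, m + 1 < j → h.coeff j = 0 := by
    intro j hj
    rw [hhc j, coeff_eq_zero_of_natDegree_lt (by rw [hFdeg]; omega), mul_zero]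
  have hhdeg : h.natDegree = m + 1 := by
    apply le_antisymm
    · exact natDegree_le_iff_coeff_eq_zero.2 fun j hj => hhzero j hj
    · apply le_natDegree_of_ne_zero
      rw [hhcoeff (m+1) le_rfl]
      have : m + 1 - (m + 1) = 0 := by omega
      rw [this, EE_zero, mul_one]
      exact descFactorial_ne_zero' (by omega)
  have hSp : EE s (m+1) f ≠ 0 := by
    intro h0; rw [h0, mul_zero] at hprod; exact lt_irrefl _ hprod
  have hh0 : h.coeff 0 ≠ 0 := by
    rw [hhcoeff 0 (by omega)]
    simp only [Nat.zero_add, Nat.sub_zero]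
    exact mul_ne_zero (descFactorial_ne_zero' (le_refl r)) hSp
  have hhsplits : h.Splits := RR_iterate hFsplits r
  set g : ℝ[X] := h.reverse with hg
  have hgsplits : g.Splits := RR_reverse hhsplits
  have hgc : ∀ j, j ≤ m + 1 → g.coeff j = h.coeff (m + 1 - j) := by
    intro j hj
    rw [hg, coeff_reverse, hhdeg, revAt_le hj]
  have hgz : ∀ j, m + 1 < j → g.coeff j = 0 := by
    intro j hj
    rw [hg, coeff_reverse, hhdeg, revAt_eq_self_of_lt hj]
    exact hhzero j hj
  set q : ℝ[X] := derivative^[m-1] g with hq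
  have hqsplits : q.Splits := RR_iterate hgsplits (m-1)
  have hqc : ∀ j, q.coeff j = ((j + (m-1)).descFactorial (m-1) : ℝ) * g.coeff (j + (m-1)) := by
    intro j; rw [hq, coeff_iterate_derivative]; simp [nsmul_eq_mul]
  have hq2 : q.coeff 2 = ((2 + (m-1)).descFactorial (m-1) : ℝ)
      * (((r).descFactorial r : ℝ) * EE s (m+1) f) := by
    rw [hqc 2]
    have e1 : 2 + (m-1) = m + 1 := by omega
    rw [e1, hgc (m+1) le_rfl]
    have e2 : m + 1 - (m+1) = 0 := by omega
    rw [e2, hhcoeff 0 (by omega)]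
    norm_num
  have hq1 : q.coeff 1 = ((1 + (m-1)).descFactorial (m-1) : ℝ)
      * (((1 + r).descFactorial r : ℝ) * EE s m f) := by
    rw [hqc 1]
    have e1 : 1 + (m-1) = m := by omega
    rw [e1, hgc m (by omega)]
    have e2 : m + 1 - m = 1 := by omega
    rw [e2, hhcoeff 1 (by omega)]
    have e3 : m + 1 - 1 = m := by omega
    rw [e3]
  have hq0 : q.coeff 0 = (((m-1)).descFactorial (m-1) : ℝ)
      * (((2 + r).descFactorial r : ℝ) * EE s (m-1) f) := by
    rw [hqc 0]
    have e1 : 0 + (m-1) = m - 1 := by omega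
    rw [e1, hgc (m-1) (by omega)]
    have e2 : m + 1 - (m-1) = 2 := by omega
    rw [e2, hhcoeff 2 (by omega)]
    have e3 : m + 1 - 2 = m - 1 := by omega
    rw [e3]
  have hqz : ∀ j, 2 < j → q.coeff j = 0 := by
    intro j hj
    rw [hqc j, hgz (j + (m-1)) (by omega), mul_zero]
  have hq2ne : q.coeff 2 ≠ 0 := by
    rw [hq2]
    exact mul_ne_zero (descFactorial_ne_zero' (by omega))
      (mul_ne_zero (descFactorial_ne_zero' (le_refl r)) hSp)
  have hqdeg : q.natDegree = 2 := by
    apply le_antisymm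
    · exact natDegree_le_iff_coeff_eq_zero.2 fun j hj => hqz j hj
    · exact le_natDegree_of_ne_zero hq2ne
  have hqne : q ≠ 0 := fun h0 => hq2ne (by rw [h0, coeff_zero])
  have hcard : Multiset.card q.roots = 2 := by
    rw [splits_iff_card_roots.1 hqsplits, hqdeg]
  obtain ⟨x, hx⟩ : ∃ x, x ∈ q.roots := by
    apply Multiset.card_pos_iff_exists_mem.1; rw [hcard]; norm_num
  have hxr : q.eval x = 0 := (mem_roots hqne).1 hx
  have heval : q.coeff 2 * (x * x) + q.coeff 1 * x + q.coeff 0 = 0 := by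
    have h3 : q.natDegree < 3 := by omega
    have := eval_eq_sum_range' h3 x
    rw [this] at hxr
    rw [Finset.sum_range_succ, Finset.sum_range_succ, Finset.sum_range_one] at hxr
    ring_nf at hxr ⊢
    linarith [hxr]
  have hdisc := discrim_eq_sq_of_quadratic_eq_zero heval
  have hd : 0 ≤ discrim (q.coeff 2) (q.coeff 1) (q.coeff 0) := by
    rw [hdisc]; positivity
  rw [discrim] at hd
  -- now pure arithmetic
  set Sm := EE s m f
  set Sp := EE s (m+1) f
  set Sn := EE s (m-1) f
  -- factorial facts
  have f1 : (1 + (m-1)).descFactorial (m-1) = m.factorial := by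
    have e : 1 + (m-1) = m := by omega
    rw [e]
    have := Nat.factorial_mul_descFactorial (show m - 1 ≤ m by omega)
    have e2 : m - (m-1) = 1 := by omega
    rw [e2] at this
    simpa using this
  have f2 : (1 + r).descFactorial r = (r+1).factorial := by
    have := Nat.factorial_mul_descFactorial (show r ≤ r + 1 by omega)
    have e2 : r + 1 - r = 1 := by omega
    rw [e2] at this
    have e3 : 1 + r = r + 1 := by omega
    rw [e3]
    simpa using this
  have f3 : 2 * ((2 + (m-1)).descFactorial (m-1)) = (m+1).factorial := by
    have e : 2 + (m-1) = m + 1 := by omega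
    rw [e]
    have := Nat.factorial_mul_descFactorial (show m - 1 ≤ m + 1 by omega)
    have e2 : m + 1 - (m-1) = 2 := by omega
    rw [e2] at this
    simpa [Nat.factorial] using this
  have f4 : (r).descFactorial r = r.factorial := by
    have := Nat.factorial_mul_descFactorial (le_refl r)
    simpa using this
  have f5 : ((m-1)).descFactorial (m-1) = (m-1).factorial := by
    have := Nat.factorial_mul_descFactorial (le_refl (m-1))
    simpa using this
  have f6 : 2 * ((2 + r).descFactorial r) = (r+2).factorial := by
    have := Nat.factorial_mul_descFactorial (show r ≤ r + 2 by omega)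
    have e2 : r + 2 - r = 2 := by omega
    rw [e2] at this
    have e3 : 2 + r = r + 2 := by omega
    rw [e3]
    simpa [Nat.factorial] using this
  have c1 : (N.choose (m-1)) * ((m-1).factorial * (r+2).factorial) = N.factorial := by
    have := Nat.choose_mul_factorial_mul_factorial (show m - 1 ≤ N by omega)
    have e : N - (m-1) = r + 2 := by omega
    rw [e] at this
    rw [← this]; ring
  have c2 : (N.choose (m+1)) * ((m+1).factorial * r.factorial) = N.factorial := by
    have := Nat.choose_mul_factorial_mul_factorial (show m + 1 ≤ N by omega)
    have e : N - (m+1) = r := by omega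
    rw [e] at this
    rw [← this]; ring
  have c3 : (N.choose m) * (m.factorial * (r+1).factorial) = N.factorial := by
    have := Nat.choose_mul_factorial_mul_factorial (show m ≤ N by omega)
    have e : N - m = r + 1 := by omega
    rw [e] at this
    rw [← this]; ring
  -- real versions
  have A : ℝ := 0
  set Ar : ℝ := (m.factorial : ℝ) * ((r+1).factorial : ℝ) with hAr
  have hApos : 0 < Ar := by positivity
  -- rewrite hd with coefficient values
  rw [hq0, hq1, hq2] at hd
  have e1 : ((1 + (m-1)).descFactorial (m-1) : ℝ) = (m.factorial : ℝ) := by exact_mod_cast f1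
  have e2 : ((1 + r).descFactorial r : ℝ) = ((r+1).factorial : ℝ) := by exact_mod_cast f2
  have e3 : 2 * ((2 + (m-1)).descFactorial (m-1) : ℝ) = ((m+1).factorial : ℝ) := by exact_mod_cast f3
  have e4 : ((r).descFactorial r : ℝ) = (r.factorial : ℝ) := by exact_mod_cast f4
  have e5 : (((m-1)).descFactorial (m-1) : ℝ) = ((m-1).factorial : ℝ) := by exact_mod_cast f5
  have e6 : 2 * ((2 + r).descFactorial r : ℝ) = ((r+2).factorial : ℝ) := by exact_mod_cast f6
  rw [e1, e2, e4, e5] at hd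
  have hd' : ((m.factorial : ℝ) * ((r+1).factorial))^2 * Sm^2
      ≥ ((m+1).factorial : ℝ) * ((r+2).factorial) * (r.factorial) * ((m-1).factorial) * (Sn * Sp) := by
    rw [← e3, ← e6]
    nlinarith [hd]
  have hCC : (0:ℝ) ≤ (N.choose (m-1) : ℝ) * (N.choose (m+1) : ℝ) := by positivity
  have hkey : ((N.choose m : ℝ))^2 * (Sn * Sp) * Ar^2
      ≤ ((N.choose (m-1) : ℝ) * (N.choose (m+1) : ℝ)) * Sm^2 * Ar^2 := by
    have h1 : ((N.choose m : ℝ))^2 * (Sn * Sp) * Ar^2 = ((N.factorial : ℝ))^2 * (Sn * Sp) := by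
      have c3' : (N.choose m : ℝ) * Ar = (N.factorial : ℝ) := by
        rw [hAr]; exact_mod_cast c3
      calc ((N.choose m : ℝ))^2 * (Sn * Sp) * Ar^2
          = ((N.choose m : ℝ) * Ar)^2 * (Sn * Sp) := by ring
        _ = ((N.factorial : ℝ))^2 * (Sn * Sp) := by rw [c3']
    have h2 : ((N.choose (m-1) : ℝ) * (N.choose (m+1) : ℝ))
        * (((m+1).factorial : ℝ) * ((r+2).factorial) * (r.factorial) * ((m-1).factorial))
        = ((N.factorial : ℝ))^2 := by
      have c1' : (N.choose (m-1) : ℝ) * (((m-1).factorial : ℝ) * ((r+2).factorial : ℝ)) = (N.factorial : ℝ) := by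
        exact_mod_cast c1
      have c2' : (N.choose (m+1) : ℝ) * (((m+1).factorial : ℝ) * ((r).factorial : ℝ)) = (N.factorial : ℝ) := by
        exact_mod_cast c2
      calc ((N.choose (m-1) : ℝ) * (N.choose (m+1) : ℝ))
          * (((m+1).factorial : ℝ) * ((r+2).factorial) * (r.factorial) * ((m-1).factorial))
          = ((N.choose (m-1) : ℝ) * (((m-1).factorial : ℝ) * ((r+2).factorial : ℝ)))
            * ((N.choose (m+1) : ℝ) * (((m+1).factorial : ℝ) * ((r).factorial : ℝ))) := by ring
        _ = (N.factorial : ℝ) * (N.factorial : ℝ) := by rw [c1', c2']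
        _ = ((N.factorial : ℝ))^2 := by ring
    rw [h1]
    calc ((N.factorial : ℝ))^2 * (Sn * Sp)
        = ((N.choose (m-1) : ℝ) * (N.choose (m+1) : ℝ))
          * (((m+1).factorial : ℝ) * ((r+2).factorial) * (r.factorial) * ((m-1).factorial)) * (Sn * Sp) := by
          rw [h2]
      _ ≤ ((N.choose (m-1) : ℝ) * (N.choose (m+1) : ℝ)) * (Ar^2 * Sm^2) := by
          have base : (((m+1).factorial : ℝ) * ((r+2).factorial) * (r.factorial) * ((m-1).factorial)) * (Sn * Sp)
              ≤ Ar^2 * Sm^2 := by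
            rw [hAr]; nlinarith [hd']
          calc ((N.choose (m-1) : ℝ) * (N.choose (m+1) : ℝ))
              * (((m+1).factorial : ℝ) * ((r+2).factorial) * (r.factorial) * ((m-1).factorial)) * (Sn * Sp)
              = ((N.choose (m-1) : ℝ) * (N.choose (m+1) : ℝ))
                * ((((m+1).factorial : ℝ) * ((r+2).factorial) * (r.factorial) * ((m-1).factorial)) * (Sn * Sp)) := by
                ring
            _ ≤ _ := mul_le_mul_of_nonneg_left base hCC
      _ = ((N.choose (m-1) : ℝ) * (N.choose (m+1) : ℝ)) * Sm^2 * Ar^2 := by ring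
  exact le_of_mul_le_mul_right hkey (by positivity)

lemma choose_sq_lt {N m : ℕ} (hm : 1 ≤ m) (hmN : m + 1 ≤ N) :
    N.choose (m-1) * N.choose (m+1) < (N.choose m)^2 := by
  have e1 : N.choose m * m = N.choose (m-1) * (N - (m-1)) := by
    have h := Nat.choose_succ_right_eq N (m-1)
    have hm1 : m - 1 + 1 = m := by omega
    rwa [hm1] at h
  have e2 : N.choose (m+1) * (m+1) = N.choose m * (N - m) := Nat.choose_succ_right_eq N m
  have hCpos : 0 < N.choose m := Nat.choose_pos (by omega)
  have key : N.choose (m-1) * N.choose (m+1) * ((m+1) * (N - (m-1)))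
      = (N.choose m)^2 * (m * (N-m)) := by
    calc N.choose (m-1) * N.choose (m+1) * ((m+1) * (N - (m-1)))
        = (N.choose (m-1) * (N - (m-1))) * (N.choose (m+1) * (m+1)) := by ring
      _ = (N.choose m * m) * (N.choose m * (N-m)) := by rw [← e1, e2]
      _ = (N.choose m)^2 * (m * (N-m)) := by ring
  have h4 : m * (N - m) < (m+1) * (N - (m-1)) := by
    have h5 : N - m < N - (m-1) := by omega
    calc m * (N - m) ≤ m * (N - (m-1)) := Nat.mul_le_mul_left m (by omega)
      _ < (m+1) * (N - (m-1)) := by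
          have h0 : 0 < N - (m-1) := by omega
          exact (Nat.mul_lt_mul_right h0).2 (by omega)
  by_contra hle
  push_neg at hle
  have h6 : (N.choose m)^2 * (m * (N-m)) < (N.choose m)^2 * ((m+1) * (N - (m-1))) :=
    (Nat.mul_lt_mul_left (by positivity)).2 h4
  have h7 : (N.choose m)^2 * ((m+1) * (N - (m-1))) ≤ N.choose (m-1) * N.choose (m+1) * ((m+1) * (N - (m-1))) :=
    Nat.mul_le_mul_right _ hle
  omega

lemma newton_weak (s : Finset ι) (f : ι → ℝ) {m : ℕ} (hm : 1 ≤ m) :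
    EE s (m-1) f * EE s (m+1) f ≤ (EE s m f)^2 := by
  rcases le_or_gt (EE s (m-1) f * EE s (m+1) f) 0 with h | h
  · exact h.trans (sq_nonneg _)
  have hm1 : m + 1 ≤ s.card := by
    by_contra hc
    push_neg at hc
    rw [EE_of_card_lt hc, mul_zero] at h
    exact lt_irrefl _ h
  have hcore := newton_core s f hm hm1
  have hlog := choose_sq_lt hm hm1
  have hlogR : ((s.card.choose (m-1) : ℝ) * (s.card.choose (m+1) : ℝ)) ≤ ((s.card.choose m : ℝ))^2 := by
    exact_mod_cast hlog.le
  have hCC : (0:ℝ) < (s.card.choose (m-1) : ℝ) * (s.card.choose (m+1) : ℝ) := by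
    have h1 : 0 < s.card.choose (m-1) := Nat.choose_pos (by omega)
    have h2 : 0 < s.card.choose (m+1) := Nat.choose_pos (by omega)
    positivity
  have h1 : ((s.card.choose (m-1) : ℝ) * (s.card.choose (m+1) : ℝ)) * (EE s (m-1) f * EE s (m+1) f)
      ≤ ((s.card.choose (m-1) : ℝ) * (s.card.choose (m+1) : ℝ)) * (EE s m f)^2 := by
    calc ((s.card.choose (m-1) : ℝ) * (s.card.choose (m+1) : ℝ)) * (EE s (m-1) f * EE s (m+1) f)
        ≤ ((s.card.choose m : ℝ))^2 * (EE s (m-1) f * EE s (m+1) f) :=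
          mul_le_mul_of_nonneg_right hlogR h.le
      _ ≤ _ := hcore
  exact le_of_mul_le_mul_left h1 hCC

lemma newton_strict (s : Finset ι) (f : ι → ℝ) {m : ℕ} (hm : 1 ≤ m) (hpos : 0 < EE s m f) :
    EE s (m-1) f * EE s (m+1) f < (EE s m f)^2 := by
  rcases le_or_gt (EE s (m-1) f * EE s (m+1) f) 0 with h | h
  · exact h.trans_lt (pow_pos hpos 2)
  have hm1 : m + 1 ≤ s.card := by
    by_contra hc
    push_neg at hc
    rw [EE_of_card_lt hc, mul_zero] at h
    exact lt_irrefl _ h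
  have hcore := newton_core s f hm hm1
  have hlog := choose_sq_lt hm hm1
  have hlogR : ((s.card.choose (m-1) : ℝ) * (s.card.choose (m+1) : ℝ)) < ((s.card.choose m : ℝ))^2 := by
    exact_mod_cast hlog
  have hCC : (0:ℝ) < (s.card.choose (m-1) : ℝ) * (s.card.choose (m+1) : ℝ) := by
    have h1 : 0 < s.card.choose (m-1) := Nat.choose_pos (by omega)
    have h2 : 0 < s.card.choose (m+1) := Nat.choose_pos (by omega)
    positivity
  have h1 : ((s.card.choose (m-1) : ℝ) * (s.card.choose (m+1) : ℝ)) * (EE s (m-1) f * EE s (m+1) f)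
      < ((s.card.choose (m-1) : ℝ) * (s.card.choose (m+1) : ℝ)) * (EE s m f)^2 := by
    calc ((s.card.choose (m-1) : ℝ) * (s.card.choose (m+1) : ℝ)) * (EE s (m-1) f * EE s (m+1) f)
        < ((s.card.choose m : ℝ))^2 * (EE s (m-1) f * EE s (m+1) f) :=
          mul_lt_mul_of_pos_right hlogR h
      _ ≤ _ := hcore
  exact lt_of_mul_lt_mul_left h1 hCC.le

lemma key_id {s : Finset ι} {i : ι} (hi : i ∈ s) (m : ℕ) (f : ι → ℝ) :
    EE (s.erase i) (m+1) f * EE s (m+1) f - EE (s.erase i) m f * EE s (m+2) f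
      = (EE (s.erase i) (m+1) f)^2 - EE (s.erase i) m f * EE (s.erase i) (m+2) f := by
  rw [EE_split hi m f, show m + 2 = (m+1)+1 from rfl, EE_split hi (m+1) f]
  ring

/-- ratio `S_{m-1;i}/S_m`, with value 0 at m = 0. -/
noncomputable def rquot (s : Finset ι) (i : ι) (f : ι → ℝ) : ℕ → ℝ :=
  fun m => if m = 0 then 0 else EE (s.erase i) (m-1) f / EE s m f

lemma chain_step {s : Finset ι} {f : ι → ℝ} {i : ι} (hi : i ∈ s) {K : ℕ}
    (hs : ∀ m, 1 ≤ m → m ≤ K → 0 < EE s m f)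
    (he : ∀ m, m + 1 ≤ K → 0 < EE (s.erase i) m f)
    {m : ℕ} (hmK : m + 1 ≤ K) :
    rquot s i f m < rquot s i f (m+1) := by
  cases m with
  | zero =>
      simp only [rquot, if_pos rfl, if_neg (Nat.one_ne_zero)]
      have h1 : EE (s.erase i) (1-1) f = 1 := EE_zero _ _
      rw [h1]
      exact div_pos one_pos (hs 1 le_rfl (by omega))
  | succ m' =>
      simp only [rquot, if_neg (Nat.succ_ne_zero m'), if_neg (Nat.succ_ne_zero (m'+1))]
      have e1 : m' + 1 - 1 = m' := by omega
      have e2 : m' + 1 + 1 - 1 = m' + 1 := by omega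
      rw [e1, e2]
      have hp1 : 0 < EE s (m'+1) f := hs (m'+1) (by omega) (by omega)
      have hp2 : 0 < EE s (m'+1+1) f := hs (m'+2) (by omega) (by omega)
      rw [div_lt_div_iff₀ hp1 hp2]
      have hkid := key_id hi m' f
      have hnewt := newton_strict (s.erase i) f (m := m'+1) (by omega)
        (he (m'+1) (by omega))
      have e3 : m' + 1 - 1 = m' := by omega
      rw [e3] at hnewt
      have e4 : m' + 1 + 1 = m' + 2 := by omega
      rw [e4] at *
      nlinarith [hkid, hnewt]

lemma chain_mono {s : Finset ι} {f : ι → ℝ} {i : ι} (hi : i ∈ s) {K L : ℕ}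
    (hLK : L < K)
    (hs : ∀ m, 1 ≤ m → m ≤ K → 0 < EE s m f)
    (he : ∀ m, m + 1 ≤ K → 0 < EE (s.erase i) m f) :
    rquot s i f L < rquot s i f K := by
  have H : ∀ M : ℕ, M ≤ K → L < M → rquot s i f L < rquot s i f M := by
    intro M
    induction M with
    | zero => omega
    | succ M ih =>
        intro hMK hLM
        rcases Nat.lt_or_ge L M with h | h
        · exact (ih (by omega) h).trans (chain_step hi hs he (by omega))
        · have : L = M := by omega
          subst this
          exact chain_step hi hs he (by omega)
  exact H K le_rfl hLK

lemma count_supersets {s A : Finset ι} (hA : A ⊆ s) {j : ℕ} (hAj : A.card ≤ j) :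
    (((s.powersetCard j).filter (fun T => A ⊆ T)).card) = (s.card - A.card).choose (j - A.card) := by
  classical
  rw [← Finset.card_sdiff_of_subset hA, ← Finset.card_powersetCard]
  apply Finset.card_bij' (fun T _ => T \ A) (fun U _ => U ∪ A)
  · intro T hT
    rw [Finset.mem_filter, Finset.mem_powersetCard] at hT
    obtain ⟨⟨hTs, hTc⟩, hAT⟩ := hT
    rw [Finset.mem_powersetCard]
    constructor
    · exact Finset.sdiff_subset_sdiff hTs (le_refl A)
    · rw [Finset.card_sdiff_of_subset hAT, hTc]
  · intro U hU
    rw [Finset.mem_powersetCard] at hU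
    obtain ⟨hUs, hUc⟩ := hU
    rw [Finset.mem_filter, Finset.mem_powersetCard]
    have hdisj : Disjoint U A :=
      Finset.disjoint_left.2 (by intro x hxU hxA; exact (Finset.mem_sdiff.1 (hUs hxU)).2 hxA)
    refine ⟨⟨?_, ?_⟩, Finset.subset_union_right⟩
    · exact Finset.union_subset (hUs.trans (Finset.sdiff_subset)) hA
    · rw [Finset.card_union_of_disjoint hdisj, hUc]
      omega
  · intro T hT
    rw [Finset.mem_filter] at hT
    exact Finset.sdiff_union_of_subset hT.2
  · intro U hU
    rw [Finset.mem_powersetCard] at hU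
    exact Finset.union_sdiff_cancel_right
      (Finset.disjoint_left.2 (by intro x hxU hxA; exact (Finset.mem_sdiff.1 (hU.1 hxU)).2 hxA))

lemma EE_shift (s : Finset ι) (j : ℕ) (f : ι → ℝ) (t : ℝ) :
    EE s j (fun i => f i + t)
      = ∑ m ∈ Finset.range (j+1), ((s.card - m).choose (j - m) : ℝ) * t^(j-m) * EE s m f := by
  classical
  have step1 : EE s j (fun i => f i + t)
      = ∑ T ∈ s.powersetCard j, ∑ A ∈ s.powerset,
          (if A ⊆ T then (∏ i ∈ A, f i) * t^(j - A.card) else 0) := by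
    rw [EE]
    refine Finset.sum_congr rfl fun T hT => ?_
    obtain ⟨hTs, hTc⟩ := Finset.mem_powersetCard.1 hT
    rw [Finset.prod_add]
    have hps : T.powerset = s.powerset.filter (fun A => A ⊆ T) := by
      ext A
      simp only [Finset.mem_powerset, Finset.mem_filter]
      exact ⟨fun h => ⟨h.trans hTs, h⟩, fun h => h.2⟩
    rw [hps, Finset.sum_filter]
    refine Finset.sum_congr rfl fun A hA => ?_
    by_cases hAT : A ⊆ T
    · rw [if_pos hAT, if_pos hAT]
      rw [Finset.prod_const, Finset.card_sdiff_of_subset hAT, hTc]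
    · rw [if_neg hAT, if_neg hAT]
  rw [step1, Finset.sum_comm]
  have step2 : ∀ A ∈ s.powerset,
      (∑ T ∈ s.powersetCard j, if A ⊆ T then (∏ i ∈ A, f i) * t^(j - A.card) else 0)
      = (if A.card ≤ j then ((s.card - A.card).choose (j - A.card) : ℝ) * t^(j - A.card) * ∏ i ∈ A, f i else 0) := by
    intro A hA
    rw [← Finset.sum_filter]
    rw [Finset.sum_const]
    by_cases hAj : A.card ≤ j
    · rw [if_pos hAj, count_supersets (Finset.mem_powerset.1 hA) hAj]
      rw [nsmul_eq_mul]
      ring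
    · rw [if_neg hAj]
      have hempty : (s.powersetCard j).filter (fun T => A ⊆ T) = ∅ := by
        rw [Finset.filter_eq_empty_iff]
        intro T hT hAT
        have := Finset.card_le_card hAT
        rw [(Finset.mem_powersetCard.1 hT).2] at this
        omega
      rw [hempty, Finset.card_empty, zero_smul]
  rw [Finset.sum_congr rfl step2]
  -- regroup by cardinality
  rw [Finset.sum_powerset]
  have step3 : ∀ m ∈ Finset.range (s.card + 1),
      (∑ A ∈ s.powersetCard m,
        (if A.card ≤ j then ((s.card - A.card).choose (j - A.card) : ℝ) * t^(j - A.card) * ∏ i ∈ A, f i else 0))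
      = (if m ≤ j then ((s.card - m).choose (j - m) : ℝ) * t^(j-m) * EE s m f else 0) := by
    intro m hm
    have hc : ∀ A ∈ s.powersetCard m, A.card = m := fun A hA => (Finset.mem_powersetCard.1 hA).2
    by_cases hmj : m ≤ j
    · rw [if_pos hmj, EE, Finset.mul_sum]
      refine Finset.sum_congr rfl fun A hA => ?_
      rw [hc A hA, if_pos hmj]
    · rw [if_neg hmj]
      apply Finset.sum_eq_zero
      intro A hA
      rw [hc A hA, if_neg hmj]
  rw [Finset.sum_congr rfl step3]
  -- compare ranges
  set M := max s.card j with hM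
  have hsub1 : Finset.range (s.card + 1) ⊆ Finset.range (M + 1) := by
    apply Finset.range_subset_range.2; omega
  have hsub2 : Finset.range (j + 1) ⊆ Finset.range (M + 1) := by
    apply Finset.range_subset_range.2; omega
  rw [Finset.sum_subset hsub1 ?h1, ← Finset.sum_subset hsub2 ?h2]
  case h1 =>
    intro m hm hnm
    have hms : s.card < m := by
      simp only [Finset.mem_range, not_lt] at hnm ⊢
      omega
    by_cases hmj : m ≤ j
    · rw [if_pos hmj, EE_of_card_lt hms, mul_zero]
    · rw [if_neg hmj]
  case h2 =>
    intro m hm hnm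
    have hmj : j < m := by
      simp only [Finset.mem_range, not_lt] at hnm ⊢
      omega
    rw [if_neg (by omega)]
  refine Finset.sum_congr rfl fun m hm => ?_
  rw [Finset.mem_range] at hm
  rw [if_pos (by omega)]

lemma EE_shift_pos {s : Finset ι} {j : ℕ} {f : ι → ℝ} {t : ℝ} (ht : 0 ≤ t)
    (hpos : ∀ m, 1 ≤ m → m ≤ j → 0 < EE s m f) (hj : 1 ≤ j) (hjs : j ≤ s.card) :
    0 < EE s j (fun i => f i + t) := by
  rw [EE_shift]
  apply Finset.sum_pos'
  · intro m hm
    rw [Finset.mem_range] at hm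
    have hEm : 0 ≤ EE s m f := by
      rcases Nat.eq_zero_or_pos m with h0 | h1
      · rw [h0, EE_zero]; norm_num
      · exact (hpos m h1 (by omega)).le
    positivity
  · refine ⟨j, Finset.mem_range.2 (by omega), ?_⟩
    have e1 : j - j = 0 := by omega
    rw [e1]
    simp only [pow_zero, Nat.choose_zero_right, Nat.cast_one, one_mul, mul_one]
    exact hpos j hj le_rfl

lemma ivt_pos {g : ℝ → ℝ} (hc : Continuous g) {T : ℝ} (hT : 0 ≤ T) (hgT : 0 < g T)
    (hne : ∀ t, 0 ≤ t → t ≤ T → g t ≠ 0) : 0 < g 0 := by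
  rcases lt_trichotomy (g 0) 0 with h | h | h
  · exfalso
    have hsub := intermediate_value_Icc hT hc.continuousOn
    have h0 : (0:ℝ) ∈ Set.Icc (g 0) (g T) := ⟨h.le, hgT.le⟩
    obtain ⟨x, hx, hx0⟩ := hsub h0
    exact hne x hx.1 hx.2 hx0
  · exact absurd h (hne 0 le_rfl hT)
  · exact h

lemma EE_continuous (s : Finset ι) (m : ℕ) (f : ι → ℝ) :
    Continuous (fun t : ℝ => EE s m (fun i => f i + t)) := by
  unfold EE
  apply continuous_finset_sum
  intro T _
  apply continuous_finset_prod
  intro i _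
  exact continuous_const.add continuous_id

lemma F3 (K : ℕ) : ∀ (s : Finset ι) (f : ι → ℝ), K ≤ s.card →
    (∀ j, 1 ≤ j → j ≤ K → 0 < EE s j f) →
    ∀ i ∈ s, ∀ m, m + 1 ≤ K → 0 < EE (s.erase i) m f := by
  induction K using Nat.strong_induction_on with
  | _ K IH =>
    intro s f hK hpos i hi m hm
    rcases Nat.eq_zero_or_pos m with h0 | h1
    · rw [h0, EE_zero]; norm_num
    rcases Nat.lt_or_ge (m+1) K with hlt | hge
    · -- use IH at K - 1
      exact IH (K-1) (by omega) s f (by omega)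
        (fun j h1 h2 => hpos j h1 (by omega)) i hi m (by omega)
    have hmK : m = K - 1 := by omega
    have hK2 : 2 ≤ K := by omega
    -- the ray argument
    set g : ℝ → ℝ := fun t => EE (s.erase i) (K-1) (fun j => f j + t) with hg
    have hcont : Continuous g := EE_continuous _ _ _
    -- big T
    set T : ℝ := 1 + ∑ j ∈ s, |f j| with hT
    have hTpos : 0 ≤ T := by
      have : 0 ≤ ∑ j ∈ s, |f j| := Finset.sum_nonneg fun j _ => abs_nonneg _
      rw [hT]; linarith
    have hfpos : ∀ j ∈ s, 0 < f j + T := by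
      intro j hj
      have h1 : |f j| ≤ ∑ j' ∈ s, |f j'| :=
        Finset.single_le_sum (fun j' _ => abs_nonneg (f j')) hj
      have h2 : -(f j) ≤ |f j| := neg_le_abs _
      rw [hT]; linarith
    have hgT : 0 < g T := by
      rw [hg]
      apply Finset.sum_pos'
      · intro t ht
        apply Finset.prod_nonneg
        intro j hj
        have hjs : j ∈ s := Finset.erase_subset i s ((Finset.mem_powersetCard.1 ht).1 hj)
        exact (hfpos j hjs).le
      · have hne : ((s.erase i).powersetCard (K-1)).Nonempty := by
          apply Finset.powersetCard_nonempty_of_le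
          rw [Finset.card_erase_of_mem hi]
          omega
        obtain ⟨t0, ht0⟩ := hne
        refine ⟨t0, ht0, ?_⟩
        apply Finset.prod_pos
        intro j hj
        have hjs : j ∈ s := Finset.erase_subset i s ((Finset.mem_powersetCard.1 ht0).1 hj)
        exact hfpos j hjs
    have hne : ∀ t, 0 ≤ t → t ≤ T → g t ≠ 0 := by
      intro t ht _ hg0
      -- shifted tuple
      set ft : ι → ℝ := fun j => f j + t with hft
      have hg0' : EE (s.erase i) (K-1) ft = 0 := hg0
      have hposft : ∀ j', 1 ≤ j' → j' ≤ K → 0 < EE s j' ft :=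
        fun j' h1 h2 => EE_shift_pos ht (fun m' hm1 hm2 => hpos m' hm1 (by omega)) h1 (by omega)
      -- S_{K-2} of erase positive by IH
      have hKm2 : 0 < EE (s.erase i) (K-2) ft := by
        apply IH (K-1) (by omega) s ft (by omega)
          (fun j' h1 h2 => hposft j' h1 (by omega)) i hi (K-2) (by omega)
      -- S_K of erase equals S_K of s > 0
      have hEK : EE (s.erase i) K ft = EE s K ft := by
        have := EE_split hi (K-1) ft
        have eK : K - 1 + 1 = K := by omega
        rw [eK] at this
        rw [this, hg0', mul_zero, add_zero]
      have hEKpos : 0 < EE (s.erase i) K ft := by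
        rw [hEK]; exact hposft K (by omega) le_rfl
      -- newton contradiction
      have hnewt := newton_weak (s.erase i) ft (m := K-1) (by omega)
      have e1 : K - 1 - 1 = K - 2 := by omega
      have e2 : K - 1 + 1 = K := by omega
      rw [e1, e2, hg0'] at hnewt
      nlinarith [hKm2, hEKpos, hnewt]
    have hres : 0 < EE (s.erase i) (K-1) (fun j => f j + 0) := ivt_pos hcont hTpos hgT hne
    have heq : (fun j => f j + 0) = f := by funext j; ring
    rw [heq] at hres
    rw [hmK]
    exact hres

lemma diffE {s : Finset ι} {i j : ι} (hi : i ∈ s) (hj : j ∈ s) (hij : i ≠ j) (m : ℕ) (f : ι → ℝ) :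
    EE (s.erase j) (m+1) f - EE (s.erase i) (m+1) f
      = (f i - f j) * EE ((s.erase i).erase j) m f := by
  have hi' : i ∈ s.erase j := Finset.mem_erase.2 ⟨hij, hi⟩
  have hj' : j ∈ s.erase i := Finset.mem_erase.2 ⟨hij.symm, hj⟩
  rw [EE_split hi' m f, EE_split hj' m f,
    show (s.erase j).erase i = (s.erase i).erase j from Finset.erase_right_comm]
  ring


end P11



/-- The m-th elementary symmetric polynomial of λ ∈ ℝⁿ, with degree in ℤ so that
negative degrees give 0 (and degree 0 gives 1). -/
noncomputable def esymm (n : ℕ) (m : ℤ) (lam : Fin n → ℝ) : ℝ :=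
  if 0 ≤ m then
    ∑ t ∈ Finset.powersetCard m.toNat (Finset.univ : Finset (Fin n)), ∏ i ∈ t, lam i
  else 0

/-- S_{m;i}(λ) = Sₘ(λ with λᵢ set to 0). -/
noncomputable def esymmAt (n : ℕ) (m : ℤ) (lam : Fin n → ℝ) (i : Fin n) : ℝ :=
  esymm n m (Function.update lam i 0)

section P11b

lemma esymm_eq_EE (n : ℕ) (m : ℕ) (lam : Fin n → ℝ) :
    esymm n (m : ℤ) lam = EE Finset.univ m lam := by
  rw [esymm, if_pos (Int.natCast_nonneg m), Int.toNat_natCast]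
  rfl

lemma EE_update_erase {n : ℕ} (s : Finset (Fin n)) (i : Fin n) (hi : i ∉ s) (m : ℕ)
    (lam : Fin n → ℝ) (x : ℝ) :
    EE s m (Function.update lam i x) = EE s m lam :=
  EE_congr (fun j hj => Function.update_of_ne (by rintro rfl; exact hi hj) x lam) m

lemma esymm_update {n : ℕ} (lam : Fin n → ℝ) (i : Fin n) (K : ℕ) (hK : 1 ≤ K) (x : ℝ) :
    esymm n (K : ℤ) (Function.update lam i x)
      = EE (Finset.univ.erase i) K lam + x * EE (Finset.univ.erase i) (K-1) lam := by
  rw [esymm_eq_EE]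
  obtain ⟨t, rfl⟩ : ∃ t, K = t + 1 := ⟨K - 1, by omega⟩
  rw [EE_split (Finset.mem_univ i) t (Function.update lam i x)]
  rw [Function.update_self]
  rw [EE_update_erase _ i (Finset.notMem_erase i _) (t+1) lam x,
    EE_update_erase _ i (Finset.notMem_erase i _) t lam x]
  simp

lemma esymmAt_eq {n : ℕ} (lam : Fin n → ℝ) (i : Fin n) (K : ℕ) (hK : 1 ≤ K) :
    esymmAt n ((K : ℤ) - 1) lam i = EE (Finset.univ.erase i) (K-1) lam := by
  rw [esymmAt]
  have e : (K : ℤ) - 1 = ((K - 1 : ℕ) : ℤ) := by omega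
  rw [e, esymm_eq_EE]
  rcases Nat.eq_zero_or_pos (K - 1) with h0 | h1
  · rw [h0, EE_zero, EE_zero]
  · obtain ⟨t, ht⟩ : ∃ t, K - 1 = t + 1 := ⟨K - 2, by omega⟩
    rw [ht, EE_split (Finset.mem_univ i) t (Function.update lam i 0)]
    rw [Function.update_self]
    rw [EE_update_erase _ i (Finset.notMem_erase i _) (t+1) lam 0]
    simp

lemma esymmAt_neg {n : ℕ} (lam : Fin n → ℝ) (i : Fin n) :
    esymmAt n (((0:ℕ) : ℤ) - 1) lam i = 0 := by
  rw [esymmAt, esymm, if_neg]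
  norm_num

lemma esymm_split {n : ℕ} (lam : Fin n → ℝ) (i : Fin n) (K : ℕ) (hK : 1 ≤ K) :
    EE (Finset.univ : Finset (Fin n)) K lam
      = EE (Finset.univ.erase i) K lam + lam i * EE (Finset.univ.erase i) (K-1) lam := by
  obtain ⟨t, rfl⟩ : ∃ t, K = t + 1 := ⟨K - 1, by omega⟩
  rw [EE_split (Finset.mem_univ i) t lam]
  simp

end P11b


/-- For n ≥ 2, n ≥ k > l ≥ 0 and λ ∈ Γₖ ordered λ₁ ≥ ⋯ ≥ λₙ, the partial
derivatives Fⁱ of F(λ) = log(Sₖ(λ)/Sₗ(λ)) = log Sₖ(λ) - log Sₗ(λ) satisfy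
Fⁱ = S_{k-1;i}/Sₖ - S_{l-1;i}/Sₗ, they are reverse ordered Fⁿ ≥ ⋯ ≥ F¹ ≥ 0, with F¹ > 0. -/
theorem stmt11 (n k l : ℕ) (hn : 2 ≤ n) (hkn : k ≤ n) (hlk : l < k)
    (lam : Fin n → ℝ)
    (hΓ : ∀ j : ℕ, 1 ≤ j → j ≤ k → 0 < esymm n j lam)
    (hord : ∀ i j : Fin n, i ≤ j → lam j ≤ lam i)
    (Fd : Fin n → ℝ)
    (hFd : ∀ i, Fd i = esymmAt n ((k : ℤ) - 1) lam i / esymm n k lam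
                      - esymmAt n ((l : ℤ) - 1) lam i / esymm n l lam) :
    (∀ i : Fin n, HasDerivAt
        (fun t => Real.log (esymm n k (Function.update lam i t)) -
                  Real.log (esymm n l (Function.update lam i t)))
        (Fd i) (lam i)) ∧
      (∀ i j : Fin n, i ≤ j → Fd i ≤ Fd j) ∧
      (∀ i : Fin n, 0 ≤ Fd i) ∧
      0 < Fd ⟨0, by omega⟩ := by
  classical
  have hk1 : 1 ≤ k := by omega
  have cardU : (Finset.univ : Finset (Fin n)).card = n := by simp
  have hSpos : ∀ m, 1 ≤ m → m ≤ k → 0 < EE (Finset.univ : Finset (Fin n)) m lam := by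
    intro m h1 h2
    have := hΓ m h1 h2
    rwa [esymm_eq_EE] at this
  have hSpos' : ∀ m : ℕ, m ≤ k → 0 < EE (Finset.univ : Finset (Fin n)) m lam := by
    intro m h2
    rcases Nat.eq_zero_or_pos m with h0 | h1
    · rw [h0, EE_zero]; norm_num
    · exact hSpos m h1 h2
  have hF3i : ∀ (i : Fin n) m, m + 1 ≤ k → 0 < EE (Finset.univ.erase i) m lam := by
    intro i m hm
    exact F3 k Finset.univ lam (by rw [cardU]; exact hkn) hSpos i (Finset.mem_univ i) m hm
  have hF3ij : ∀ (i j : Fin n), i ≠ j → ∀ m, m + 1 ≤ k - 1 →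
      0 < EE ((Finset.univ.erase i).erase j) m lam := by
    intro i j hij m hm
    apply F3 (k-1) (Finset.univ.erase i) lam
    · rw [Finset.card_erase_of_mem (Finset.mem_univ i), cardU]; omega
    · intro j' h1 h2
      exact hF3i i j' (by omega)
    · exact Finset.mem_erase.2 ⟨hij.symm, Finset.mem_univ j⟩
    · exact hm
  have hFdi : ∀ i, Fd i = rquot Finset.univ i lam k - rquot Finset.univ i lam l := by
    intro i
    rw [hFd i]
    congr 1
    · rw [rquot, if_neg (by omega : ¬ k = 0), esymmAt_eq lam i k hk1, esymm_eq_EE]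
    · rcases Nat.eq_zero_or_pos l with h0 | h1
      · subst h0
        rw [rquot, if_pos rfl, esymmAt_neg, zero_div]
      · rw [rquot, if_neg (by omega : ¬ l = 0), esymmAt_eq lam i l h1, esymm_eq_EE]
  have hFdpos : ∀ i, 0 < Fd i := by
    intro i
    rw [hFdi i]
    have := chain_mono (Finset.mem_univ i) hlk hSpos (fun m hm => hF3i i m hm)
    linarith [this]
  refine ⟨?_, ?_, fun i => (hFdpos i).le, hFdpos _⟩
  · -- derivatives
    intro i
    have hvalk : EE (Finset.univ.erase i) k lam + lam i * EE (Finset.univ.erase i) (k-1) lam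
        = EE (Finset.univ : Finset (Fin n)) k lam := (esymm_split lam i k hk1).symm
    have hSk : 0 < EE (Finset.univ : Finset (Fin n)) k lam := hSpos k hk1 le_rfl
    have hbk : HasDerivAt (fun t : ℝ => EE (Finset.univ.erase i) k lam
        + t * EE (Finset.univ.erase i) (k-1) lam) (EE (Finset.univ.erase i) (k-1) lam) (lam i) := by
      simpa using ((hasDerivAt_id (lam i)).mul_const
        (EE (Finset.univ.erase i) (k-1) lam)).const_add (EE (Finset.univ.erase i) k lam)
    have hlogk : HasDerivAt (fun t => Real.log (esymm n (k : ℤ) (Function.update lam i t)))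
        (EE (Finset.univ.erase i) (k-1) lam / EE (Finset.univ : Finset (Fin n)) k lam) (lam i) := by
      have heq : (fun t => Real.log (esymm n (k : ℤ) (Function.update lam i t)))
          = fun t => Real.log (EE (Finset.univ.erase i) k lam
              + t * EE (Finset.univ.erase i) (k-1) lam) := by
        funext t; rw [esymm_update lam i k hk1 t]
      rw [heq]
      have hres := hbk.log (by rw [hvalk]; exact hSk.ne')
      rwa [hvalk] at hres
    have hlogl : HasDerivAt (fun t => Real.log (esymm n (l : ℤ) (Function.update lam i t)))
        (rquot Finset.univ i lam l) (lam i) := by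
      rcases Nat.eq_zero_or_pos l with h0 | h1
      · subst h0
        have heq : (fun t => Real.log (esymm n ((0:ℕ) : ℤ) (Function.update lam i t)))
            = fun _ => (0:ℝ) := by
          funext t
          rw [esymm_eq_EE, EE_zero, Real.log_one]
        rw [heq, rquot, if_pos rfl]
        exact hasDerivAt_const (lam i) 0
      · have hvall : EE (Finset.univ.erase i) l lam + lam i * EE (Finset.univ.erase i) (l-1) lam
            = EE (Finset.univ : Finset (Fin n)) l lam := (esymm_split lam i l h1).symm
        have hSl : 0 < EE (Finset.univ : Finset (Fin n)) l lam := hSpos l h1 (by omega)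
        have hbl : HasDerivAt (fun t : ℝ => EE (Finset.univ.erase i) l lam
            + t * EE (Finset.univ.erase i) (l-1) lam) (EE (Finset.univ.erase i) (l-1) lam) (lam i) := by
          simpa using ((hasDerivAt_id (lam i)).mul_const
            (EE (Finset.univ.erase i) (l-1) lam)).const_add (EE (Finset.univ.erase i) l lam)
        have heq : (fun t => Real.log (esymm n (l : ℤ) (Function.update lam i t)))
            = fun t => Real.log (EE (Finset.univ.erase i) l lam
                + t * EE (Finset.univ.erase i) (l-1) lam) := by
          funext t; rw [esymm_update lam i l h1 t]
        rw [heq, rquot, if_neg (by omega : ¬ l = 0)]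
        have hres := hbl.log (by rw [hvall]; exact hSl.ne')
        rwa [hvall] at hres
    have hcomb := hlogk.sub hlogl
    have hval : EE (Finset.univ.erase i) (k-1) lam / EE (Finset.univ : Finset (Fin n)) k lam
        - rquot Finset.univ i lam l = Fd i := by
      rw [hFdi i]
      simp only [rquot]
      rw [if_neg (show ¬ k = 0 by omega)]
    rwa [hval] at hcomb
  · -- monotonicity
    intro i j hij
    rcases eq_or_lt_of_le hij with heq | hlt
    · rw [show i = j from heq]
    · have hne : i ≠ j := ne_of_lt hlt
      have hlam : lam j ≤ lam i := hord i j hij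
      have hper : ∀ K : ℕ, rquot Finset.univ j lam K - rquot Finset.univ i lam K
          = (lam i - lam j) * ((if 2 ≤ K then EE ((Finset.univ.erase i).erase j) (K-2) lam else 0)
              / EE (Finset.univ : Finset (Fin n)) K lam) := by
        intro K
        match K with
        | 0 => simp [rquot]
        | 1 =>
          rw [rquot, rquot, if_neg one_ne_zero, if_neg one_ne_zero]
          rw [show (1:ℕ) - 1 = 0 from rfl, EE_zero, EE_zero]
          rw [if_neg (by omega : ¬ 2 ≤ 1)]
          simp
        | (K'' + 2) =>
          rw [rquot, rquot, if_neg (Nat.succ_ne_zero _), if_neg (Nat.succ_ne_zero _)]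
          rw [div_sub_div_same]
          rw [show (K'' + 2) - 1 = K'' + 1 from rfl]
          rw [diffE (Finset.mem_univ i) (Finset.mem_univ j) hne K'' lam]
          rw [if_pos (by omega : 2 ≤ K'' + 2), show (K'' + 2) - 2 = K'' from rfl]
          rw [mul_div_assoc]
      have hD : (if 2 ≤ l then EE ((Finset.univ.erase i).erase j) (l-2) lam else 0)
            / EE (Finset.univ : Finset (Fin n)) l lam
          ≤ (if 2 ≤ k then EE ((Finset.univ.erase i).erase j) (k-2) lam else 0)
            / EE (Finset.univ : Finset (Fin n)) k lam := by
        have hSk : 0 < EE (Finset.univ : Finset (Fin n)) k lam := hSpos k hk1 le_rfl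
        have hSl : 0 < EE (Finset.univ : Finset (Fin n)) l lam := hSpos' l (by omega)
        rcases Nat.lt_or_ge k 2 with hk2 | hk2
        · -- k = 1, l = 0
          rw [if_neg (by omega), if_neg (by omega), zero_div, zero_div]
        rcases Nat.lt_or_ge l 2 with hl2 | hl2
        · rw [if_neg (by omega), zero_div, if_pos hk2]
          have hX : 0 < EE ((Finset.univ.erase i).erase j) (k-2) lam :=
            hF3ij i j hne (k-2) (by omega)
          positivity
        · rw [if_pos hk2, if_pos (by omega)]
          have hP1 : 0 < EE (Finset.univ.erase i) (l-1) lam := hF3i i (l-1) (by omega)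
          have hP2 : 0 < EE (Finset.univ.erase i) (k-1) lam := hF3i i (k-1) (by omega)
          have hZ : 0 < EE ((Finset.univ.erase i).erase j) (l-2) lam :=
            hF3ij i j hne (l-2) (by omega)
          have cA := chain_mono (s := Finset.univ.erase i) (f := lam) (i := j)
            (Finset.mem_erase.2 ⟨hne.symm, Finset.mem_univ j⟩)
            (show l - 1 < k - 1 by omega)
            (fun m h1 h2 => hF3i i m (by omega))
            (fun m hm => hF3ij i j hne m hm)
          have cB := chain_mono (s := (Finset.univ : Finset (Fin n))) (f := lam) (i := i)
            (Finset.mem_univ i) hlk hSpos (fun m hm => hF3i i m hm)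
          rw [rquot, rquot, if_neg (by omega : ¬ l - 1 = 0), if_neg (by omega : ¬ k - 1 = 0)] at cA
          rw [rquot, rquot, if_neg (by omega : ¬ l = 0), if_neg (by omega : ¬ k = 0)] at cB
          rw [show l - 1 - 1 = l - 2 from by omega, show k - 1 - 1 = k - 2 from by omega] at cA
          rw [div_lt_div_iff₀ hP1 hP2] at cA
          rw [div_lt_div_iff₀ hSl hSk] at cB
          rw [div_le_div_iff₀ hSl hSk]
          nlinarith [mul_lt_mul_of_pos_left cB hZ, mul_lt_mul_of_pos_right cA hSk, hP1, hSl, hSk, hZ]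
      have hgoal : 0 ≤ Fd j - Fd i := by
        rw [hFdi i, hFdi j]
        have e : rquot Finset.univ j lam k - rquot Finset.univ j lam l
            - (rquot Finset.univ i lam k - rquot Finset.univ i lam l)
            = (rquot Finset.univ j lam k - rquot Finset.univ i lam k)
              - (rquot Finset.univ j lam l - rquot Finset.univ i lam l) := by ring
        rw [e, hper k, hper l]
        have := mul_nonneg (sub_nonneg.2 hlam)
          (sub_nonneg.2 hD)
        calc (0:ℝ) ≤ (lam i - lam j) * ((if 2 ≤ k then EE ((Finset.univ.erase i).erase j) (k-2) lam else 0)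
              / EE (Finset.univ : Finset (Fin n)) k lam
            - (if 2 ≤ l then EE ((Finset.univ.erase i).erase j) (l-2) lam else 0)
              / EE (Finset.univ : Finset (Fin n)) l lam) := this
          _ = _ := by ring
      linarith [hgoal]
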